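/- Let R be a ring in which every square element is the sum of three idempotents and a nilpotent that pairwise commute. Then 6 is nilpotent in R. -/

import Mathlib

lemma key_three_idem {R : Type*} [Ring R] {e f g : R} (he : e*e = e) (hf : f*f = f) (hg : g*g = g)
    (hef : e*f = f*e) (heg : e*g = g*e) (hfg : f*g = g*f) :
    (e+f+g)*((e+f+g)-1)*((e+f+g)-2)*((e+f+g)-3) = 0 := by
  have hef' : ∀ x : R, f*(e*x) = e*(f*x) := fun x => by rw [← mul_assoc, ← hef, mul_assoc]
  have heg' : ∀ x : R, g*(e*x) = e*(g*x) := fun x => by rw [← mul_assoc, ← heg, mul_assoc]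
  have hfg' : ∀ x : R, g*(f*x) = f*(g*x) := fun x => by rw [← mul_assoc, ← hfg, mul_assoc]
  have he' : ∀ x : R, e*(e*x) = e*x := fun x => by rw [← mul_assoc, he]
  have hf' : ∀ x : R, f*(f*x) = f*x := fun x => by rw [← mul_assoc, hf]
  have hg' : ∀ x : R, g*(g*x) = g*x := fun x => by rw [← mul_assoc, hg]
  set s := e + f + g with hs
  set t := e*f + e*g + f*g with ht
  set u := e*(f*g) with hu
  have hs2 : s*s = s + 2*t := by
    rw [hs, ht]
    calc (e+f+g)*(e+f+g)
        = (e*e + f*f + g*g) + ((e*f + f*e) + (e*g + g*e) + (f*g + g*f)) := by noncomm_ring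
      _ = (e+f+g) + 2*(e*f + e*g + f*g) := by
          rw [he, hf, hg, ← hef, ← heg, ← hfg]; noncomm_ring
  have hst : s*t = 2*t + 3*u := by
    rw [hs, ht, hu]
    calc (e+f+g)*(e*f + e*g + f*g)
        = (e*(e*f) + e*(e*g) + e*(f*g)) + (f*(e*f) + f*(e*g) + f*(f*g))
            + (g*(e*f) + g*(e*g) + g*(f*g)) := by noncomm_ring
      _ = 2*(e*f + e*g + f*g) + 3*(e*(f*g)) := by
          simp only [hef', heg', hfg', he', hf', hg', he, hf, hg, ← hef, ← heg, ← hfg]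
          noncomm_ring
  have hsu : s*u = 3*u := by
    rw [hs, hu]
    calc (e+f+g)*(e*(f*g))
        = e*(e*(f*g)) + f*(e*(f*g)) + g*(e*(f*g)) := by noncomm_ring
      _ = 3*(e*(f*g)) := by
          simp only [hef', heg', hfg', he', hf', hg', he, hf, hg, ← hef, ← heg, ← hfg]
          noncomm_ring
  have hs3 : s*(s*s) = s + 6*t + 6*u := by
    calc s*(s*s) = s*(s + 2*t) := by rw [hs2]
      _ = s*s + (s*t + s*t) := by noncomm_ring
      _ = (s + 2*t) + ((2*t + 3*u) + (2*t + 3*u)) := by rw [hs2, hst]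
      _ = s + 6*t + 6*u := by noncomm_ring
  have hs4 : s*(s*(s*s)) = s + 14*t + 36*u := by
    calc s*(s*(s*s)) = s*(s + 6*t + 6*u) := by rw [hs3]
      _ = s*s + (s*t + s*t + s*t + s*t + s*t + s*t)
            + (s*u + s*u + s*u + s*u + s*u + s*u) := by noncomm_ring
      _ = (s + 2*t) + ((2*t+3*u) + (2*t+3*u) + (2*t+3*u) + (2*t+3*u) + (2*t+3*u) + (2*t+3*u))
            + ((3*u) + (3*u) + (3*u) + (3*u) + (3*u) + (3*u)) := by rw [hs2, hst, hsu]
      _ = s + 14*t + 36*u := by noncomm_ring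
  calc s*(s-1)*(s-2)*(s-3)
      = s*(s*(s*s)) - 6*(s*(s*s)) + 11*(s*s) - 6*s := by noncomm_ring
    _ = (s + 14*t + 36*u) - 6*(s + 6*t + 6*u) + 11*(s + 2*t) - 6*s := by rw [hs4, hs3, hs2]
    _ = 0 := by noncomm_ring

theorem stmt_6 (R : Type*) [Ring R]
    (h : ∀ x : R, ∃ e f g w : R, IsIdempotentElem e ∧ IsIdempotentElem f ∧
      IsIdempotentElem g ∧ IsNilpotent w ∧
      Commute e f ∧ Commute e g ∧ Commute e w ∧
      Commute f g ∧ Commute f w ∧ Commute g w ∧ x ^ 2 = e + f + g + w) :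
    IsNilpotent (6 : R) := by
  obtain ⟨e, f, g, w, he, hf, hg, hw, hef, heg, hew, hfg, hfw, hgw, hx⟩ := h 2
  have h4 : e + f + g = 4 - w := by
    have h4' : (4 : R) = e + f + g + w := by rw [← hx]; norm_num
    rw [h4']; noncomm_ring
  have hkey : ((4:R)-w)*((4-w)-1)*((4-w)-2)*((4-w)-3) = 0 := by
    rw [← h4]
    exact key_three_idem he hf hg hef heg hfg
  have h24 : (24:R) = w * (50 - 35*w + 10*(w*w) - w*(w*w)) := by
    calc (24:R) = ((4-w)*((4-w)-1)*((4-w)-2)*((4-w)-3))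
          + w * (50 - 35*w + 10*(w*w) - w*(w*w)) := by
            noncomm_ring
            simp [nsmul_eq_mul]
            norm_num
      _ = w * (50 - 35*w + 10*(w*w) - w*(w*w)) := by rw [hkey, zero_add]
  have hc : Commute w (50 - 35*w + 10*(w*w) - w*(w*w)) := by
    unfold Commute SemiconjBy; noncomm_ring
  have h24n : IsNilpotent (24 : R) := h24 ▸ hc.isNilpotent_mul_right hw
  obtain ⟨n, hn⟩ := h24n
  refine ⟨3*n, ?_⟩
  calc (6:R)^(3*n) = ((6:R)^3)^n := by rw [pow_mul]
    _ = ((9:R)*24)^n := by norm_num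
    _ = (9:R)^n * (24:R)^n := ((Commute.ofNat_left 9 (24:R)).mul_pow n)
    _ = 0 := by rw [hn, mul_zero]
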